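/- Let X₁,…,Xₙ be i.i.d. random variables taking values in a measurable space S, and let f : S × S → ℝᵈ be a symmetric measurable kernel with E|f_m(X₁,X₂)| < ∞ for each coordinate m. Let Uₙ = [n(n-1)]⁻¹ Σ_{1≤i≠j≤n} f(Xᵢ,Xⱼ) and let m = ⌊n/2⌋. Then E|Uₙ - E Uₙ|_∞ ≤ (1/m) E|Σ_{i=1}^{m} [f(Xᵢ, X_{i+m}) - E f(X₁,X₂)]|_∞, where |·|_∞ denotes the coordinatewise maximum absolute value. -/

import Mathlib

open MeasureTheory ProbabilityTheory

section Aux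

open Finset

lemma sup_abs_eq_norm {d : ℕ} (v : Fin d → ℝ) : (⨆ k : Fin d, |v k|) = ‖v‖ := by
  rcases isEmpty_or_nonempty (Fin d) with h | h
  · rw [Real.iSup_of_isEmpty]
    simp [Pi.norm_def]
  · refine le_antisymm (ciSup_le fun k => ?_) ?_
    · rw [← Real.norm_eq_abs]; exact norm_le_pi_norm v k
    · refine (pi_norm_le_iff_of_nonneg ?_).2 fun k => ?_
      · obtain ⟨k⟩ := h
        exact le_trans (abs_nonneg (v k))
          (le_ciSup (f := fun k => |v k|) (Set.Finite.bddAbove (Set.finite_range _)) k)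
      · rw [Real.norm_eq_abs]
        exact le_ciSup (f := fun k => |v k|) (Set.Finite.bddAbove (Set.finite_range _)) k

lemma exists_perm_pair {α : Type*} [DecidableEq α] {i j i' j' : α} (h : i ≠ j) (h' : i' ≠ j') :
    ∃ π : Equiv.Perm α, π i = i' ∧ π j = j' := by
  refine ⟨(Equiv.swap i i').trans (Equiv.swap ((Equiv.swap i i') j) j'), ?_, ?_⟩
  · simp only [Equiv.trans_apply, Equiv.swap_apply_left]
    refine Equiv.swap_apply_of_ne_of_ne ?_ h'
    intro hc
    have : (Equiv.swap i i') i = (Equiv.swap i i') j := by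
      rw [Equiv.swap_apply_left]; exact hc
    exact h ((Equiv.swap i i').injective this)
  · simp only [Equiv.trans_apply, Equiv.swap_apply_left]

lemma perm_inv_apply_self {α : Type*} (f : Equiv.Perm α) (x : α) : f⁻¹ (f x) = x :=
  f.symm_apply_apply x

lemma fiber_card_const {n : ℕ} {a b a' b' i j i' j' : Fin n}
    (hab : a ≠ b) (hij : i ≠ j) (hab' : a' ≠ b') (hij' : i' ≠ j') :
    #{σ ∈ (univ : Finset (Equiv.Perm (Fin n))) | σ a = i ∧ σ b = j}
      = #{σ ∈ (univ : Finset (Equiv.Perm (Fin n))) | σ a' = i' ∧ σ b' = j'} := by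
  obtain ⟨π, hπ1, hπ2⟩ := exists_perm_pair hab' hab
  obtain ⟨π', hπ'1, hπ'2⟩ := exists_perm_pair hij hij'
  refine Finset.card_bij' (fun σ _ => π' * σ * π) (fun τ _ => π'⁻¹ * τ * π⁻¹) ?_ ?_ ?_ ?_
  · intro σ hσ
    simp only [Finset.mem_filter, Finset.mem_univ, true_and] at hσ ⊢
    simp [Equiv.Perm.mul_apply, hπ1, hπ2, hσ.1, hσ.2, hπ'1, hπ'2]
  · intro τ hτ
    simp only [Finset.mem_filter, Finset.mem_univ, true_and] at hτ ⊢
    simp only [Equiv.Perm.mul_apply]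
    constructor
    · rw [← hπ1, perm_inv_apply_self, hτ.1, ← hπ'1, perm_inv_apply_self]
    · rw [← hπ2, perm_inv_apply_self, hτ.2, ← hπ'2, perm_inv_apply_self]
  · intro σ _; group
  · intro τ _; group

lemma perm_sum_fiber {n : ℕ} {E : Type*} [AddCommMonoid E] {a b : Fin n} (hab : a ≠ b)
    (G : Fin n → Fin n → E) :
    ∑ σ : Equiv.Perm (Fin n), G (σ a) (σ b)
      = ∑ p ∈ (univ : Finset (Fin n)).offDiag,
          #{σ ∈ (univ : Finset (Equiv.Perm (Fin n))) | σ a = p.1 ∧ σ b = p.2} • G p.1 p.2 := by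
  have hmaps : ∀ σ ∈ (univ : Finset (Equiv.Perm (Fin n))),
      (σ a, σ b) ∈ (univ : Finset (Fin n)).offDiag := by
    intro σ _
    simp [Finset.mem_offDiag, σ.injective.ne hab]
  rw [← Finset.sum_fiberwise_of_maps_to hmaps (fun σ => G (σ a) (σ b))]
  refine Finset.sum_congr rfl fun p hp => ?_
  rw [show (filter (fun σ : Equiv.Perm (Fin n) => (σ a, σ b) = p) univ)
        = (filter (fun σ : Equiv.Perm (Fin n) => σ a = p.1 ∧ σ b = p.2) univ) from by
      ext σ; simp [Prod.ext_iff]]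
  rw [Finset.sum_congr rfl (g := fun _ => G p.1 p.2) (fun σ hσ => by
      simp only [Finset.mem_filter, Finset.mem_univ, true_and] at hσ
      rw [hσ.1, hσ.2]), Finset.sum_const]

lemma fiber_card_total {n : ℕ} {a b : Fin n} (hab : a ≠ b) :
    ∑ p ∈ (univ : Finset (Fin n)).offDiag,
        #{σ ∈ (univ : Finset (Equiv.Perm (Fin n))) | σ a = p.1 ∧ σ b = p.2} = n.factorial := by
  have hmaps : ∀ σ ∈ (univ : Finset (Equiv.Perm (Fin n))),
      (σ a, σ b) ∈ (univ : Finset (Fin n)).offDiag := by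
    intro σ _
    simp [Finset.mem_offDiag, σ.injective.ne hab]
  have := Finset.card_eq_sum_card_fiberwise hmaps
  rw [Finset.card_univ, Fintype.card_perm, Fintype.card_fin] at this
  rw [this]
  exact Finset.sum_congr rfl fun p _ => by congr 1; ext σ; simp [Prod.ext_iff]

lemma key_alg {n m : ℕ} {E : Type*} [AddCommGroup E] [Module ℝ E] (hn : 2 ≤ n) (hm : 1 ≤ m)
    (e₁ e₂ : Fin m → Fin n) (he : ∀ t, e₁ t ≠ e₂ t) (F : Fin n → Fin n → E) (θ : E) :
    ((n : ℝ) * ((n : ℝ) - 1))⁻¹ • (∑ p ∈ (univ : Finset (Fin n)).offDiag, F p.1 p.2) - θ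
      = ((n.factorial : ℝ))⁻¹ • ∑ σ : Equiv.Perm (Fin n),
          (m : ℝ)⁻¹ • ∑ t : Fin m, (F (σ (e₁ t)) (σ (e₂ t)) - θ) := by
  set S : E := ∑ p ∈ (univ : Finset (Fin n)).offDiag, F p.1 p.2 with hS
  set t₀ : Fin m := ⟨0, hm⟩
  set K : ℕ := #{σ ∈ (univ : Finset (Equiv.Perm (Fin n))) |
      σ (e₁ t₀) = e₁ t₀ ∧ σ (e₂ t₀) = e₂ t₀} with hKdef
  have hfib : ∀ (a b : Fin n), a ≠ b → ∀ p ∈ (univ : Finset (Fin n)).offDiag,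
      #{σ ∈ (univ : Finset (Equiv.Perm (Fin n))) | σ a = p.1 ∧ σ b = p.2} = K := by
    intro a b hab p hp
    rw [Finset.mem_offDiag] at hp
    exact fiber_card_const hab hp.2.2 (he t₀) (he t₀)
  have hcard_offDiag : ((univ : Finset (Fin n)).offDiag).card = n * (n - 1) := by
    rw [Finset.offDiag_card, Finset.card_univ, Fintype.card_fin]
    rw [Nat.sub_one, Nat.mul_pred]
  have hcount : K * (n * (n - 1)) = n.factorial := by
    have h := fiber_card_total (he t₀)
    rw [Finset.sum_congr rfl (hfib _ _ (he t₀)), Finset.sum_const, hcard_offDiag,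
      smul_eq_mul] at h
    rw [← h]; ring
  have h2 : (∑ σ : Equiv.Perm (Fin n), ∑ t : Fin m, F (σ (e₁ t)) (σ (e₂ t))) = (m * K) • S := by
    rw [Finset.sum_comm]
    have : ∀ t : Fin m, (∑ σ : Equiv.Perm (Fin n), F (σ (e₁ t)) (σ (e₂ t))) = K • S := by
      intro t
      rw [perm_sum_fiber (he t), Finset.sum_congr rfl (fun p hp => by rw [hfib _ _ (he t) p hp]),
        hS, Finset.smul_sum]
    rw [Finset.sum_congr rfl (fun t _ => this t), Finset.sum_const, Finset.card_univ,
      Fintype.card_fin, smul_smul]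
  have h1 : ∀ σ : Equiv.Perm (Fin n), (∑ t : Fin m, (F (σ (e₁ t)) (σ (e₂ t)) - θ))
      = (∑ t : Fin m, F (σ (e₁ t)) (σ (e₂ t))) - m • θ := by
    intro σ
    rw [Finset.sum_sub_distrib, Finset.sum_const, Finset.card_univ, Fintype.card_fin]
  rw [Finset.sum_congr rfl (fun σ _ => by rw [h1 σ]), ← Finset.smul_sum,
    Finset.sum_sub_distrib, h2, Finset.sum_const, Finset.card_univ, Fintype.card_perm,
    Fintype.card_fin]
  have hmne : (m : ℝ) ≠ 0 := Nat.cast_ne_zero.2 (by omega)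
  have hfne : ((n.factorial : ℝ)) ≠ 0 := Nat.cast_ne_zero.2 n.factorial_ne_zero
  have hnn1 : ((n : ℝ) * ((n : ℝ) - 1)) ≠ 0 := by
    have h2n : (2 : ℝ) ≤ (n : ℝ) := by exact_mod_cast hn
    exact mul_ne_zero (by linarith) (by linarith)
  have hcountR : (K : ℝ) * ((n : ℝ) * ((n : ℝ) - 1)) = (n.factorial : ℝ) := by
    have := congrArg (fun x : ℕ => (x : ℝ)) hcount
    push_cast at this
    rw [Nat.cast_sub (by omega : 1 ≤ n)] at this
    push_cast at this
    linarith [this]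
  rw [smul_sub, smul_sub, smul_smul, smul_smul]
  rw [← Nat.cast_smul_eq_nsmul ℝ (m * K) S, ← Nat.cast_smul_eq_nsmul ℝ n.factorial (m • θ),
    ← Nat.cast_smul_eq_nsmul ℝ m θ]
  rw [smul_smul, smul_smul, smul_smul]
  congr 1
  · congr 1
    push_cast
    rw [← hcountR]
    have hK : (K:ℝ) ≠ 0 := by
      rintro h; rw [h, zero_mul] at hcountR; exact hfne hcountR.symm
    field_simp
  · rw [show ((n.factorial : ℝ))⁻¹ * (m : ℝ)⁻¹ * (n.factorial : ℝ) * (m : ℝ) = 1 by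
      field_simp, one_smul]

lemma law_vec {Ω S : Type*} [MeasureSpace Ω] [IsProbabilityMeasure (ℙ : Measure Ω)]
    [MeasurableSpace S] (X : ℕ → Ω → S) (hmeas : ∀ i, Measurable (X i))
    (hindep : iIndepFun X ℙ)
    (hident : ∀ i, IdentDistrib (X i) (X 0) ℙ ℙ)
    {N : ℕ} (g : Fin N → ℕ) (hg : Function.Injective g) :
    Measure.map (fun ω (t : Fin N) => X (g t) ω) ℙ
      = Measure.pi (fun _ => Measure.map (X 0) ℙ) := by
  have hprob : IsProbabilityMeasure (Measure.map (X 0) ℙ) :=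
    Measure.isProbabilityMeasure_map (hmeas 0).aemeasurable
  have hY : Measurable (fun ω (t : Fin N) => X (g t) ω) :=
    measurable_pi_lambda _ fun t => hmeas _
  refine (Measure.pi_eq fun s hs => ?_).symm
  rw [Measure.map_apply hY (MeasurableSet.univ_pi hs)]
  classical
  set sets : ℕ → Set S := Function.extend g s (fun _ => Set.univ) with hsets
  have hsets_apply : ∀ t, sets (g t) = s t := fun t => hg.extend_apply _ _ _
  have hpre : (fun ω (t : Fin N) => X (g t) ω) ⁻¹' (Set.univ.pi s)
      = ⋂ i ∈ Finset.univ.image g, X i ⁻¹' sets i := by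
    ext ω
    simp only [Set.mem_preimage, Set.mem_univ_pi, Set.mem_iInter, Finset.mem_image,
      Finset.mem_univ, true_and]
    constructor
    · rintro h i ⟨t, rfl⟩
      rw [hsets_apply]; exact h t
    · intro h t
      have := h (g t) ⟨t, rfl⟩
      rwa [hsets_apply] at this
  rw [hpre]
  rw [hindep.measure_inter_preimage_eq_mul (Finset.univ.image g) (sets := sets)
    (fun i hi => ?_)]
  · rw [Finset.prod_image (fun t _ t' _ h => hg h)]
    refine Finset.prod_congr rfl fun t _ => ?_
    rw [hsets_apply, ← Measure.map_apply (hmeas (g t)) (hs t), (hident (g t)).map_eq]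
  · simp only [Finset.mem_image, Finset.mem_univ, true_and] at hi
    obtain ⟨t, rfl⟩ := hi
    rw [hsets_apply]; exact hs t

lemma integrable_pi' {Ω : Type*} [MeasureSpace Ω] {d : ℕ} {F : Ω → Fin d → ℝ}
    (hFmeas : Measurable F) (h : ∀ k, Integrable (fun ω => F ω k) ℙ) : Integrable F ℙ := by
  refine Integrable.mono' (g := fun ω => ∑ k, |F ω k|)
    (integrable_finset_sum _ fun k _ => (h k).abs) hFmeas.aestronglyMeasurable
    (Filter.Eventually.of_forall fun ω => ?_)
  have hg0 : (0 : ℝ) ≤ ∑ k, |F ω k| := Finset.sum_nonneg fun k _ => abs_nonneg _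
  refine (pi_norm_le_iff_of_nonneg hg0).2 fun k => ?_
  rw [Real.norm_eq_abs]
  exact Finset.single_le_sum (fun k _ => abs_nonneg (F ω k)) (Finset.mem_univ k)

lemma pair_integrable {Ω S : Type*} [MeasureSpace Ω] [IsProbabilityMeasure (ℙ : Measure Ω)]
    [MeasurableSpace S] (X : ℕ → Ω → S) (hmeas : ∀ i, Measurable (X i))
    (hindep : iIndepFun X ℙ)
    (hident : ∀ i, IdentDistrib (X i) (X 0) ℙ ℙ)
    (g : S → S → ℝ) (hgmeas : Measurable (fun q : S × S => g q.1 q.2))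
    (hgint : Integrable (fun ω => g (X 0 ω) (X 1 ω)) ℙ)
    {a b : ℕ} (hab : a ≠ b) :
    Integrable (fun ω => g (X a ω) (X b ω)) ℙ := by
  set G : (Fin 2 → S) → ℝ := fun v => g (v 0) (v 1) with hG
  have hGmeas : Measurable G := by
    have hGeq : G = (fun q : S × S => g q.1 q.2) ∘ (fun v : Fin 2 → S => (v 0, v 1)) := rfl
    rw [hGeq]
    exact hgmeas.comp ((measurable_pi_apply 0).prodMk (measurable_pi_apply 1))
  have hinj : ∀ {u v : ℕ}, u ≠ v → Function.Injective (![u, v]) := by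
    intro u v huv t t' h
    fin_cases t <;> fin_cases t' <;>
      simp_all [Matrix.cons_val_zero, Matrix.cons_val_one, Matrix.head_cons]
  have hYmeas : ∀ c : Fin 2 → ℕ, Measurable (fun ω (t : Fin 2) => X (c t) ω) :=
    fun c => measurable_pi_lambda _ fun t => hmeas _
  have key : ∀ (u v : ℕ), u ≠ v →
      (Integrable (fun ω => g (X u ω) (X v ω)) ℙ
        ↔ Integrable G (Measure.pi fun _ : Fin 2 => Measure.map (X 0) ℙ)) := by
    intro u v huv
    have hlaw := law_vec X hmeas hindep hident ![u, v] (hinj huv)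
    have hcomp : (fun ω => g (X u ω) (X v ω))
        = G ∘ (fun ω (t : Fin 2) => X (![u, v] t) ω) := by
      funext ω
      simp [hG, Matrix.cons_val_zero, Matrix.cons_val_one, Matrix.head_cons]
    rw [hcomp, ← hlaw]
    exact (integrable_map_measure hGmeas.aestronglyMeasurable (hYmeas _).aemeasurable).symm
  exact (key a b hab).mpr ((key 0 1 (by omega)).mp hgint)

end Aux

/-- Data-splitting bound for U-statistics: for an i.i.d. sample `X₁,…,Xₙ` and a symmetric
integrable kernel `f : S × S → ℝᵈ`, with `Uₙ = [n(n-1)]⁻¹ Σ_{i≠j} f(Xᵢ,Xⱼ)`, `θ = E f(X₁,X₂)`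
(`= E Uₙ`) and `m = ⌊n/2⌋`, one has
`E |Uₙ - E Uₙ|_∞ ≤ m⁻¹ E |Σ_{i<m} (f(Xᵢ, X_{i+m}) - θ)|_∞`. -/
theorem stmt1 {Ω S : Type*} [MeasureSpace Ω] [IsProbabilityMeasure (ℙ : Measure Ω)]
    [MeasurableSpace S] {n d : ℕ} (hn : 2 ≤ n)
    (X : ℕ → Ω → S) (hmeas : ∀ i, Measurable (X i))
    (hindep : iIndepFun X ℙ)
    (hident : ∀ i, IdentDistrib (X i) (X 0) ℙ ℙ)
    (f : S → S → Fin d → ℝ)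
    (hfmeas : ∀ k, Measurable (fun q : S × S => f q.1 q.2 k))
    (hsym : ∀ x₁ x₂, f x₁ x₂ = f x₂ x₁)
    (hint : ∀ k, Integrable (fun ω => f (X 0 ω) (X 1 ω) k) ℙ)
    (θ : Fin d → ℝ) (hθ : ∀ k, θ k = ∫ ω, f (X 0 ω) (X 1 ω) k ∂ℙ) :
    (∫ ω, ⨆ k : Fin d,
        |((n : ℝ) * ((n : ℝ) - 1))⁻¹ * (∑ i ∈ Finset.range n, ∑ j ∈ Finset.range n,
            if i ≠ j then f (X i ω) (X j ω) k else 0) - θ k| ∂ℙ)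
      ≤ ((n / 2 : ℕ) : ℝ)⁻¹ *
        ∫ ω, ⨆ k : Fin d,
          |∑ i ∈ Finset.range (n / 2), (f (X i ω) (X (i + n / 2) ω) k - θ k)| ∂ℙ := by
  classical
  set m := n / 2 with hmdef
  have hm : 1 ≤ m := by omega
  have h2m : 2 * m ≤ n := by omega
  set e₁ : Fin m → Fin n := fun t => ⟨t.1, by have := t.2; omega⟩ with he₁
  set e₂ : Fin m → Fin n := fun t => ⟨t.1 + m, by have := t.2; omega⟩ with he₂
  have he : ∀ t, e₁ t ≠ e₂ t := by
    intro t
    simp only [he₁, he₂, ne_eq, Fin.mk.injEq]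
    omega
  set W : Equiv.Perm (Fin n) → Ω → (Fin d → ℝ) :=
    fun σ ω => ∑ t : Fin m, (f (X ((σ (e₁ t) : Fin n) : ℕ) ω) (X ((σ (e₂ t) : Fin n) : ℕ) ω) - θ)
    with hWdef
  have hprob : IsProbabilityMeasure (Measure.map (X 0) ℙ) :=
    Measure.isProbabilityMeasure_map (hmeas 0).aemeasurable
  -- measurability of W σ
  have hWmeas : ∀ σ, Measurable (W σ) := by
    intro σ
    refine measurable_pi_iff.mpr fun k => ?_
    have : (fun ω => W σ ω k)
        = fun ω => ∑ t : Fin m,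
            (f (X ((σ (e₁ t) : Fin n) : ℕ) ω) (X ((σ (e₂ t) : Fin n) : ℕ) ω) k - θ k) := by
      funext ω
      simp [hWdef, Finset.sum_apply]
    rw [this]
    exact Finset.measurable_sum _ fun t _ =>
      (((hfmeas k).comp ((hmeas _).prodMk (hmeas _))).sub measurable_const)
  -- coordinatewise integrability for distinct indices
  have hpair : ∀ (a b : ℕ), a ≠ b → ∀ k, Integrable (fun ω => f (X a ω) (X b ω) k) ℙ := by
    intro a b hab k
    exact pair_integrable X hmeas hindep hident (fun x y => f x y k) (hfmeas k) (hint k) hab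
  -- integrability of the vector W (refl)
  have hW1int : Integrable (W (Equiv.refl (Fin n))) ℙ := by
    refine integrable_pi' (hWmeas _) fun k => ?_
    have : (fun ω => W (Equiv.refl (Fin n)) ω k)
        = fun ω => ∑ t : Fin m, (f (X t.1 ω) (X (t.1 + m) ω) k - θ k) := by
      funext ω
      simp [hWdef, Finset.sum_apply, he₁, he₂]
    rw [this]
    exact integrable_finset_sum _ fun t _ =>
      (hpair t.1 (t.1 + m) (by omega) k).sub (integrable_const _)
  -- the norm function H
  set H : (Fin n → S) → ℝ :=
    fun v => ‖(∑ t : Fin m, (f (v (e₁ t)) (v (e₂ t)) - θ) : Fin d → ℝ)‖ with hHdef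
  have hHmeas : Measurable H := by
    refine Measurable.norm ?_
    refine measurable_pi_iff.mpr fun k => ?_
    have : (fun v : Fin n → S => (∑ t : Fin m, (f (v (e₁ t)) (v (e₂ t)) - θ) : Fin d → ℝ) k)
        = fun v => ∑ t : Fin m, (f (v (e₁ t)) (v (e₂ t)) k - θ k) := by
      funext v
      simp [Finset.sum_apply]
    rw [this]
    exact Finset.measurable_sum _ fun t _ =>
      (((hfmeas k).comp (f := fun v : Fin n → S => (v (e₁ t), v (e₂ t)))
        ((measurable_pi_apply (e₁ t)).prodMk (measurable_pi_apply (e₂ t)))).sub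
        measurable_const)
  have hYmeas : ∀ g : Fin n → ℕ, Measurable (fun ω (t : Fin n) => X (g t) ω) :=
    fun g => measurable_pi_lambda _ fun t => hmeas _
  have hcomp : ∀ σ : Equiv.Perm (Fin n),
      (fun ω => ‖W σ ω‖) = H ∘ (fun ω (t : Fin n) => X ((σ t : Fin n) : ℕ) ω) := by
    intro σ
    funext ω
    simp [hWdef, hHdef, Function.comp]
  have hlaw : ∀ σ : Equiv.Perm (Fin n),
      Measure.map (fun ω (t : Fin n) => X ((σ t : Fin n) : ℕ) ω) ℙ
        = Measure.pi (fun _ => Measure.map (X 0) ℙ) :=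
    fun σ => law_vec X hmeas hindep hident _ (Fin.val_injective.comp σ.injective)
  have hHint : Integrable H (Measure.pi (fun _ : Fin n => Measure.map (X 0) ℙ)) := by
    rw [← hlaw (Equiv.refl (Fin n))]
    refine (integrable_map_measure hHmeas.aestronglyMeasurable
      (hYmeas _).aemeasurable).mpr ?_
    rw [← hcomp (Equiv.refl (Fin n))]
    exact hW1int.norm
  have hWnormint : ∀ σ, Integrable (fun ω => ‖W σ ω‖) ℙ := by
    intro σ
    rw [hcomp σ]
    refine (integrable_map_measure hHmeas.aestronglyMeasurable
      (hYmeas _).aemeasurable).mp ?_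
    rw [hlaw σ]
    exact hHint
  have hEW : ∀ σ : Equiv.Perm (Fin n),
      ∫ ω, ‖W σ ω‖ ∂ℙ = ∫ ω, ‖W (Equiv.refl (Fin n)) ω‖ ∂ℙ := by
    intro σ
    rw [hcomp σ, hcomp (Equiv.refl (Fin n))]
    have h1 := integral_map (hYmeas (fun t => ((σ t : Fin n) : ℕ))).aemeasurable
      (f := H) (by rw [hlaw σ]; exact hHint.aestronglyMeasurable)
    have h2 := integral_map (hYmeas (fun t => ((Equiv.refl (Fin n) t : Fin n) : ℕ))).aemeasurable
      (f := H) (by rw [hlaw (Equiv.refl (Fin n))]; exact hHint.aestronglyMeasurable)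
    have := h1.symm.trans (by rw [hlaw σ, ← hlaw (Equiv.refl (Fin n))] : (∫ y, H y
        ∂(Measure.map (fun ω (t : Fin n) => X ((σ t : Fin n) : ℕ) ω) ℙ)) = ∫ y, H y
        ∂(Measure.map (fun ω (t : Fin n) => X ((Equiv.refl (Fin n) t : Fin n) : ℕ) ω) ℙ))
    exact this.trans h2
  -- pointwise representation of the U-statistic
  have hUkey : ∀ ω, (fun k => ((n : ℝ) * ((n : ℝ) - 1))⁻¹ *
        (∑ i ∈ Finset.range n, ∑ j ∈ Finset.range n,
          if i ≠ j then f (X i ω) (X j ω) k else 0) - θ k)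
      = ((n.factorial : ℝ))⁻¹ • ∑ σ : Equiv.Perm (Fin n), (m : ℝ)⁻¹ • W σ ω := by
    intro ω
    have halg := key_alg hn hm e₁ e₂ he (fun i j : Fin n => f (X (i : ℕ) ω) (X (j : ℕ) ω)) θ
    rw [← halg]
    funext k
    simp only [Pi.sub_apply, Pi.smul_apply, smul_eq_mul, Finset.sum_apply]
    congr 1
    have hoff : (Finset.univ : Finset (Fin n)).offDiag
        = (Finset.univ ×ˢ Finset.univ).filter (fun p : Fin n × Fin n => p.1 ≠ p.2) := by
      ext p; simp [Finset.mem_offDiag]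
    rw [← Fin.sum_univ_eq_sum_range
        (fun i => ∑ j ∈ Finset.range n, if i ≠ j then f (X i ω) (X j ω) k else 0) n]
    have hinner : (∑ i : Fin n, ∑ j ∈ Finset.range n,
          if (i : ℕ) ≠ j then f (X (i : ℕ) ω) (X j ω) k else 0)
        = ∑ i : Fin n, ∑ j : Fin n,
          if (i : ℕ) ≠ (j : ℕ) then f (X (i : ℕ) ω) (X (j : ℕ) ω) k else 0 :=
      Finset.sum_congr rfl fun i _ => (Fin.sum_univ_eq_sum_range
        (fun j => if (i : ℕ) ≠ j then f (X (i : ℕ) ω) (X j ω) k else 0) n).symm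
    rw [hinner]
    rw [← Finset.sum_product' (f := fun i j : Fin n =>
      if (i : ℕ) ≠ (j : ℕ) then f (X (i : ℕ) ω) (X (j : ℕ) ω) k else 0)]
    rw [hoff, Finset.sum_filter]
    simp only [ne_eq, Fin.val_inj]
  -- pointwise norm bound
  have hptwise : ∀ ω, (⨆ k : Fin d, |((n : ℝ) * ((n : ℝ) - 1))⁻¹ *
        (∑ i ∈ Finset.range n, ∑ j ∈ Finset.range n,
          if i ≠ j then f (X i ω) (X j ω) k else 0) - θ k|)
      ≤ ∑ σ : Equiv.Perm (Fin n), ((n.factorial : ℝ))⁻¹ * ((m : ℝ)⁻¹ * ‖W σ ω‖) := by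
    intro ω
    have h0 : (⨆ k : Fin d, |((n : ℝ) * ((n : ℝ) - 1))⁻¹ *
          (∑ i ∈ Finset.range n, ∑ j ∈ Finset.range n,
            if i ≠ j then f (X i ω) (X j ω) k else 0) - θ k|)
        = ‖(fun k => ((n : ℝ) * ((n : ℝ) - 1))⁻¹ *
            (∑ i ∈ Finset.range n, ∑ j ∈ Finset.range n,
              if i ≠ j then f (X i ω) (X j ω) k else 0) - θ k : Fin d → ℝ)‖ :=
      sup_abs_eq_norm _
    rw [h0, hUkey ω]
    calc ‖((n.factorial : ℝ))⁻¹ • ∑ σ : Equiv.Perm (Fin n), (m : ℝ)⁻¹ • W σ ω‖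
        = ((n.factorial : ℝ))⁻¹ * ‖∑ σ : Equiv.Perm (Fin n), (m : ℝ)⁻¹ • W σ ω‖ := by
          rw [norm_smul, Real.norm_eq_abs, abs_of_nonneg (by positivity)]
      _ ≤ ((n.factorial : ℝ))⁻¹ * ∑ σ : Equiv.Perm (Fin n), ‖(m : ℝ)⁻¹ • W σ ω‖ :=
          mul_le_mul_of_nonneg_left (norm_sum_le _ _) (by positivity)
      _ = ∑ σ : Equiv.Perm (Fin n), ((n.factorial : ℝ))⁻¹ * ((m : ℝ)⁻¹ * ‖W σ ω‖) := by
          rw [Finset.mul_sum]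
          exact Finset.sum_congr rfl fun σ _ => by
            rw [norm_smul, Real.norm_eq_abs, abs_of_nonneg (by positivity)]
  -- RHS integrand identification
  have hRHSfun : ∀ ω, (⨆ k : Fin d,
        |∑ i ∈ Finset.range m, (f (X i ω) (X (i + m) ω) k - θ k)|)
      = ‖W (Equiv.refl (Fin n)) ω‖ := by
    intro ω
    have h0 : (⨆ k : Fin d, |∑ i ∈ Finset.range m, (f (X i ω) (X (i + m) ω) k - θ k)|)
        = ‖(fun k => ∑ i ∈ Finset.range m, (f (X i ω) (X (i + m) ω) k - θ k) : Fin d → ℝ)‖ :=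
      sup_abs_eq_norm _
    rw [h0]
    congr 1
    funext k
    have : W (Equiv.refl (Fin n)) ω k
        = ∑ t : Fin m, (f (X t.1 ω) (X (t.1 + m) ω) k - θ k) := by
      simp [hWdef, Finset.sum_apply, he₁, he₂]
    rw [this, ← Fin.sum_univ_eq_sum_range (fun i => f (X i ω) (X (i + m) ω) k - θ k) m]
  have hfne : ((n.factorial : ℝ)) ≠ 0 := Nat.cast_ne_zero.2 n.factorial_ne_zero
  calc (∫ ω, ⨆ k : Fin d,
        |((n : ℝ) * ((n : ℝ) - 1))⁻¹ * (∑ i ∈ Finset.range n, ∑ j ∈ Finset.range n,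
            if i ≠ j then f (X i ω) (X j ω) k else 0) - θ k| ∂ℙ)
      ≤ ∫ ω, ∑ σ : Equiv.Perm (Fin n), ((n.factorial : ℝ))⁻¹ * ((m : ℝ)⁻¹ * ‖W σ ω‖) ∂ℙ := by
        refine integral_mono_of_nonneg (Filter.Eventually.of_forall fun ω => ?_)
          (integrable_finset_sum _ fun σ _ => ((hWnormint σ).const_mul _).const_mul _)
          (Filter.Eventually.of_forall fun ω => hptwise ω)
        exact Real.iSup_nonneg fun k => abs_nonneg _
    _ = ∑ σ : Equiv.Perm (Fin n), ((n.factorial : ℝ))⁻¹ * ((m : ℝ)⁻¹ * ∫ ω, ‖W σ ω‖ ∂ℙ) := by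
        rw [integral_finset_sum _ fun σ _ => ((hWnormint σ).const_mul _).const_mul _]
        exact Finset.sum_congr rfl fun σ _ => by
          rw [integral_const_mul, integral_const_mul]
    _ = ∑ σ : Equiv.Perm (Fin n),
          ((n.factorial : ℝ))⁻¹ * ((m : ℝ)⁻¹ * ∫ ω, ‖W (Equiv.refl (Fin n)) ω‖ ∂ℙ) :=
        Finset.sum_congr rfl fun σ _ => by rw [hEW σ]
    _ = (m : ℝ)⁻¹ * ∫ ω, ‖W (Equiv.refl (Fin n)) ω‖ ∂ℙ := by
        rw [Finset.sum_const, Finset.card_univ, Fintype.card_perm, Fintype.card_fin,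
          nsmul_eq_mul]
        field_simp
    _ = (m : ℝ)⁻¹ * ∫ ω, ⨆ k : Fin d,
          |∑ i ∈ Finset.range m, (f (X i ω) (X (i + m) ω) k - θ k)| ∂ℙ := by
        congr 1
        exact (integral_congr_ae (Filter.Eventually.of_forall fun ω => hRHSfun ω)).symm
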